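/- In R = W[[q−1]], one has (p)_{q^{p+1}} = λ·(p)_q where λ = 1 + (q²−q)·∂_{q^p}((p)_q) is a unit of R. -/

import Mathlib

/-- The twisted integer (q-analog) `(k)_q = 1 + q + ⋯ + q^{k-1}`. -/
def qInt {R : Type*} [CommRing R] (q : R) (n : ℕ) : R := ∑ i ∈ Finset.range n, q ^ i

/-- In `R = W[[q−1]]` (with `q = X+1`), one has `(p)_{q^{p+1}} = λ·(p)_q`, where
`λ = 1 + (q²−q)·∂_{q^p}((p)_q)` is a unit of `R`; here `∂_{q^p}` is the `q^p`-derivation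
(with respect to `γ(q) = q^{p+1}`) with `∂_{q^p}(q) = 1`. -/
theorem stmt12 {W : Type*} [CommRing W] (p : ℕ) (hp : 0 < p)
    (γ : PowerSeries W →ₐ[W] PowerSeries W)
    (hγ : γ (PowerSeries.X + 1) = (PowerSeries.X + 1) ^ (p + 1))
    (d : PowerSeries W →ₗ[W] PowerSeries W)
    (hd : ∀ α β : PowerSeries W, d (α * β) = d α * β + γ α * d β)
    (hdq : d (PowerSeries.X + 1) = 1) :
    qInt ((PowerSeries.X + 1 : PowerSeries W) ^ (p + 1)) p =
      (1 + ((PowerSeries.X + 1) ^ 2 - (PowerSeries.X + 1)) *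
          d (qInt (PowerSeries.X + 1 : PowerSeries W) p)) *
        qInt (PowerSeries.X + 1 : PowerSeries W) p ∧
    IsUnit (1 + ((PowerSeries.X + 1 : PowerSeries W) ^ 2 - (PowerSeries.X + 1)) *
        d (qInt (PowerSeries.X + 1 : PowerSeries W) p)) := by
  set q : PowerSeries W := PowerSeries.X + 1 with hq
  clear_value q
  have hd1 : d 1 = 0 := by
    have h := hd 1 1
    simp only [mul_one, map_one, one_mul] at h
    exact (left_eq_add.mp h)
  -- q * d (q^k) = q^k * (k)_{q^p}
  have hT : ∀ k, q * d (q ^ k) = q ^ k * ∑ j ∈ Finset.range k, (q ^ p) ^ j := by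
    intro k
    induction k with
    | zero => simp [hd1]
    | succ k ih =>
      have hstep : d (q ^ (k + 1)) = d q * q ^ k + γ q * d (q ^ k) := by
        rw [pow_succ']
        exact hd q (q ^ k)
      rw [hstep, hdq, hγ, geom_sum_succ]
      linear_combination (q : PowerSeries W) ^ (p + 1) * ih
  simp only [qInt]
  set S := ∑ i ∈ Finset.range p, q ^ i with hS
  have key : ∀ i, (q ^ (p + 1)) ^ i
      = q ^ i + (q - 1) * (q ^ i * ∑ j ∈ Finset.range i, (q ^ p) ^ j) * S := by
    intro i
    have h1 := geom_sum_mul (q ^ p) i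
    have h2 := geom_sum_mul q p
    rw [hS, show (q ^ (p + 1)) ^ i = q ^ i * (q ^ p) ^ i by
      rw [pow_succ', mul_pow]]
    linear_combination (-(q ^ i)) * h1 - (q ^ i * ∑ j ∈ Finset.range i, (q ^ p) ^ j) * h2
  constructor
  · rw [Finset.sum_congr rfl (fun i _ => key i), Finset.sum_add_distrib, map_sum]
    have h3 : q * ∑ i ∈ Finset.range p, d (q ^ i)
        = ∑ i ∈ Finset.range p, q ^ i * ∑ j ∈ Finset.range i, (q ^ p) ^ j := by
      rw [Finset.mul_sum]
      exact Finset.sum_congr rfl fun i _ => hT i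
    rw [← Finset.sum_mul, ← Finset.mul_sum, ← h3]
    ring
  · rw [PowerSeries.isUnit_iff_constantCoeff]
    have : PowerSeries.constantCoeff (1 + (q ^ 2 - q) * d S) = 1 := by
      simp [hq]
    rw [this]
    exact isUnit_one
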